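/- arXiv:1803.10111 — 3 statements merged into one kernel-verified Lean document; each statement's English description precedes it below -/
import Mathlib

section
/- Let p₁ > 1/2, p₂ ≥ 0, p₁ > p₂, p₂ ≥ 1 − p₁ − p₂ ≥ 0, and set p'₁ = p₁²/N and p'₂ = (p₂² + (1−p₁−p₂)²)/N where N = p₁² + (1−p₁)². Then p'₁ + p'₂ ≤ 1, p'₁ > p'₂, and p'₂ ≥ 1 − p'₁ − p'₂, i.e. the ordering conditions on the Bell coefficients are preserved by the DEJMPS map on rank-three Bell diagonal states. -/
/-- The DEJMPS map on rank-three Bell diagonal states preserves the ordering conditions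
on the Bell coefficients. -/
theorem dejmps_preserves_ordering (p₁ p₂ : ℝ)
    (h₁ : 1 / 2 < p₁) (h₂ : 0 ≤ p₂) (h₃ : p₂ < p₁)
    (h₄ : 1 - p₁ - p₂ ≤ p₂) (h₅ : 0 ≤ 1 - p₁ - p₂) :
    p₁ ^ 2 / (p₁ ^ 2 + (1 - p₁) ^ 2)
        + (p₂ ^ 2 + (1 - p₁ - p₂) ^ 2) / (p₁ ^ 2 + (1 - p₁) ^ 2) ≤ 1
      ∧ (p₂ ^ 2 + (1 - p₁ - p₂) ^ 2) / (p₁ ^ 2 + (1 - p₁) ^ 2)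
          < p₁ ^ 2 / (p₁ ^ 2 + (1 - p₁) ^ 2)
      ∧ 1 - p₁ ^ 2 / (p₁ ^ 2 + (1 - p₁) ^ 2)
            - (p₂ ^ 2 + (1 - p₁ - p₂) ^ 2) / (p₁ ^ 2 + (1 - p₁) ^ 2)
          ≤ (p₂ ^ 2 + (1 - p₁ - p₂) ^ 2) / (p₁ ^ 2 + (1 - p₁) ^ 2) := by
  have hN : 0 < p₁ ^ 2 + (1 - p₁) ^ 2 := by nlinarith
  refine ⟨?_, ?_, ?_⟩
  · rw [← add_div, div_le_one hN]
    nlinarith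
  · rw [div_lt_div_iff_of_pos_right hN]
    nlinarith [mul_nonneg h₂ h₅]
  · have hb : (1 - p₁) ^ 2 ≤ 2 * (p₂ ^ 2 + (1 - p₁ - p₂) ^ 2) := by nlinarith
    have hb' : (1 - p₁) ^ 2 / (p₁ ^ 2 + (1 - p₁) ^ 2)
        ≤ 2 * ((p₂ ^ 2 + (1 - p₁ - p₂) ^ 2) / (p₁ ^ 2 + (1 - p₁) ^ 2)) := by
      rw [← mul_div_assoc]
      gcongr
    have hs : p₁ ^ 2 / (p₁ ^ 2 + (1 - p₁) ^ 2) + (1 - p₁) ^ 2 / (p₁ ^ 2 + (1 - p₁) ^ 2) = 1 := by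
      rw [← add_div, div_self hN.ne']
    linarith
end

section
/- Success probability bound for mixtures: let ρ = ∑_i λ_i ρ_i with λ_i > 0 and ∑_i λ_i = 1, and suppose a protocol (Λ, P✓) achieves f(Λ,P✓,ρ) = f_opt(ρ) = max_i f_opt(ρ_i), and the index k achieving max_i f(Λ,P✓,ρ_i) is unique in the sense that f(Λ,P✓,ρ_i) < f(Λ,P✓,ρ_k) for all i ≠ k with positive success probability. Then p(Λ,P✓,ρ) ≤ λ_k. -/
open Matrix Kronecker
open scoped ComplexOrder

noncomputable section

/-- Choi matrix of a map from operators on `Fin dIn` to operators on `Fin dOut × Fin dF`. -/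
def choiMat {dIn dOut dF : ℕ}
    (L : Matrix (Fin dIn) (Fin dIn) ℂ → Matrix (Fin dOut × Fin dF) (Fin dOut × Fin dF) ℂ) :
    Matrix ((Fin dOut × Fin dF) × Fin dIn) ((Fin dOut × Fin dF) × Fin dIn) ℂ :=
  fun p q => (L (Matrix.single p.2 q.2 1)) p.1 q.1

/-- A conditional (post-selected) protocol: a CPTP map `Λ` from the input system to
output ⊗ flag, together with a projector `P✓` on the flag register declaring success. -/
structure Protocol (dIn dOut : ℕ) where
  dF : ℕ
  Λ : Matrix (Fin dIn) (Fin dIn) ℂ →ₗ[ℂ] Matrix (Fin dOut × Fin dF) (Fin dOut × Fin dF) ℂ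
  cp : (choiMat (⇑Λ)).PosSemidef
  tp : ∀ ρ, (Λ ρ).trace = ρ.trace
  P : Matrix (Fin dF) (Fin dF) ℂ
  hproj : P * P = P
  hherm : P.IsHermitian

/-- Unnormalized conditional output `Ψ(Λ,P✓,ρ) = tr_F((I ⊗ P✓) Λ(ρ))`. -/
def condOut {dIn dOut : ℕ} (pr : Protocol dIn dOut)
    (ρ : Matrix (Fin dIn) (Fin dIn) ℂ) : Matrix (Fin dOut) (Fin dOut) ℂ :=
  fun o o' => ∑ f : Fin pr.dF,
    (((1 : Matrix (Fin dOut) (Fin dOut) ℂ) ⊗ₖ pr.P) * pr.Λ ρ) (o, f) (o', f)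

/-- Success probability `p = tr Ψ`. -/
def succProb {dIn dOut : ℕ} (pr : Protocol dIn dOut)
    (ρ : Matrix (Fin dIn) (Fin dIn) ℂ) : ℝ :=
  (condOut pr ρ).trace.re

/-- Conditional output fidelity `f = ⟨φ|Ψ|φ⟩ / p` to the target pure state `φ`. -/
def fid {dIn dOut : ℕ} (φ : Fin dOut → ℂ) (pr : Protocol dIn dOut)
    (ρ : Matrix (Fin dIn) (Fin dIn) ℂ) : ℝ :=
  (star φ ⬝ᵥ (condOut pr ρ).mulVec φ).re / succProb pr ρ

/-- `f_opt(ρ)`: the supremum of conditional output fidelities over all protocols with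
positive success probability on `ρ`. -/
def fopt {dIn dOut : ℕ} (φ : Fin dOut → ℂ) (ρ : Matrix (Fin dIn) (Fin dIn) ℂ) : ℝ :=
  sSup {x : ℝ | ∃ pr : Protocol dIn dOut, 0 < succProb pr ρ ∧ fid φ pr ρ = x}


section
open scoped MatrixOrder Matrix.Norms.L2Operator in
lemma Matrix.posSemidef_iff_eq_transpose_mul_self {n : Type*} [Fintype n] [DecidableEq n]
    {A : Matrix n n ℂ} : A.PosSemidef ↔ ∃ B : Matrix n n ℂ, A = Bᴴ * B := by
  constructor
  · intro hA
    obtain ⟨B, hB⟩ := CStarAlgebra.nonneg_iff_eq_star_mul_self.mp hA.nonneg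
    exact ⟨B, hB⟩
  · rintro ⟨B, rfl⟩
    exact Matrix.posSemidef_conjTranspose_mul_self B
end

lemma psd_trace_nonneg' {n : Type*} [Fintype n] [DecidableEq n] {A : Matrix n n ℂ}
    (hA : A.PosSemidef) : 0 ≤ A.trace := by
  rw [Matrix.trace]
  apply Finset.sum_nonneg
  intro i _
  have h := hA.dotProduct_mulVec_nonneg (Pi.single i 1)
  simpa [dotProduct, Matrix.mulVec, Pi.single_apply] using h
lemma trace_mul_psd_nonneg {n : Type*} [Fintype n] [DecidableEq n] {A B : Matrix n n ℂ}
    (hA : A.PosSemidef) (hB : B.PosSemidef) : 0 ≤ (A * B).trace := by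
  obtain ⟨S, hS⟩ := Matrix.posSemidef_iff_eq_transpose_mul_self.mp hA
  have : (A * B).trace = (Sᴴᴴ * B * Sᴴ).trace := by
    rw [Matrix.conjTranspose_conjTranspose, hS, Matrix.mul_assoc, Matrix.trace_mul_comm]
  rw [this]
  exact psd_trace_nonneg' (hB.conjTranspose_mul_mul_same _)
lemma lam_apply_eq {dIn d2 : ℕ} {dF : ℕ}
    (L : Matrix (Fin dIn) (Fin dIn) ℂ →ₗ[ℂ] Matrix (Fin d2 × Fin dF) (Fin d2 × Fin dF) ℂ)
    (ρ : Matrix (Fin dIn) (Fin dIn) ℂ) (a b : Fin d2 × Fin dF) :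
    L ρ a b = ∑ i, ∑ j, ρ i j * choiMat (⇑L) (a, i) (b, j) := by
  conv_lhs => rw [Matrix.matrix_eq_sum_single ρ]
  rw [map_sum, Matrix.sum_apply]
  refine Finset.sum_congr rfl fun i _ => ?_
  rw [map_sum, Matrix.sum_apply]
  refine Finset.sum_congr rfl fun j _ => ?_
  have : Matrix.single i j (ρ i j) = ρ i j • Matrix.single i j 1 := by
    rw [Matrix.smul_single, smul_eq_mul, mul_one]
  rw [this, _root_.map_smul, Matrix.smul_apply, choiMat, smul_eq_mul]
lemma lam_posSemidef {dIn d2 dF : ℕ}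
    (L : Matrix (Fin dIn) (Fin dIn) ℂ →ₗ[ℂ] Matrix (Fin d2 × Fin dF) (Fin d2 × Fin dF) ℂ)
    (hC : (choiMat (⇑L)).PosSemidef)
    {ρ : Matrix (Fin dIn) (Fin dIn) ℂ} (hρ : ρ.PosSemidef) : (L ρ).PosSemidef := by
  obtain ⟨B, hB⟩ := Matrix.posSemidef_iff_eq_transpose_mul_self.mp hρ
  have hρe : ∀ i j, ρ i j = ∑ m, star (B m i) * B m j := by
    intro i j
    rw [hB]
    simp [Matrix.mul_apply, Matrix.conjTranspose_apply]
  refine Matrix.PosSemidef.of_dotProduct_mulVec_nonneg ?_ ?_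
  · ext a b
    rw [Matrix.conjTranspose_apply, lam_apply_eq, lam_apply_eq, star_sum]
    rw [Finset.sum_comm]
    refine Finset.sum_congr rfl fun i _ => ?_
    rw [star_sum]
    refine Finset.sum_congr rfl fun j _ => ?_
    rw [star_mul', ← hρ.isHermitian.apply, ← hC.isHermitian.apply]
    rw [star_star, star_star]
  · intro v
    have hsum : ρ = ∑ m, Matrix.of (fun i j => star (B m i) * B m j) := by
      ext i j
      rw [hρe]
      simp [Matrix.sum_apply]
    have hmv : ∀ (A : Fin dIn → Matrix (Fin d2 × Fin dF) (Fin d2 × Fin dF) ℂ),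
        (∑ x, A x) *ᵥ v = ∑ x, A x *ᵥ v := by
      intro A
      ext j
      simp only [Matrix.mulVec, dotProduct, Matrix.sum_apply, Finset.sum_mul,
        Finset.sum_apply]
      exact Finset.sum_comm
    have hdp : ∀ (w : Fin dIn → ((Fin d2 × Fin dF) → ℂ)),
        star v ⬝ᵥ (∑ x, w x) = ∑ x, star v ⬝ᵥ w x := by
      intro w
      simp only [dotProduct, Finset.sum_apply, Finset.mul_sum]
      exact Finset.sum_comm
    rw [hsum, map_sum, hmv, hdp]
    apply Finset.sum_nonneg
    intro m _
    have key : star v ⬝ᵥ (L (Matrix.of fun i j => star (B m i) * B m j)) *ᵥ v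
        = star (fun q : (Fin d2 × Fin dF) × Fin dIn => v q.1 * B m q.2) ⬝ᵥ
          (choiMat (⇑L)) *ᵥ (fun q => v q.1 * B m q.2) := by
      simp only [dotProduct, Matrix.mulVec, Pi.star_apply, Fintype.sum_prod_type,
        lam_apply_eq, Matrix.of_apply, star_mul', Finset.mul_sum, Finset.sum_mul]
      refine Finset.sum_congr rfl fun a1 _ => ?_
      refine Finset.sum_congr rfl fun a2 _ => ?_
      refine Eq.trans (Finset.sum_congr rfl fun b1 _ => Finset.sum_comm) ?_
      refine Eq.trans Finset.sum_comm ?_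
      refine Finset.sum_congr rfl fun i _ => ?_
      refine Finset.sum_congr rfl fun b1 _ => ?_
      refine Finset.sum_congr rfl fun b2 _ => ?_
      refine Finset.sum_congr rfl fun j _ => ?_
      ring
    rw [key]
    exact hC.dotProduct_mulVec_nonneg _
lemma partialTrace_posSemidef {dO dF : ℕ} {M : Matrix (Fin dO × Fin dF) (Fin dO × Fin dF) ℂ}
    (hM : M.PosSemidef) :
    (Matrix.of fun o o' => ∑ f, M (o, f) (o', f) : Matrix (Fin dO) (Fin dO) ℂ).PosSemidef := by
  refine Matrix.PosSemidef.of_dotProduct_mulVec_nonneg ?_ ?_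
  · ext o o'
    simp only [Matrix.conjTranspose_apply, Matrix.of_apply, star_sum]
    refine Finset.sum_congr rfl fun f _ => ?_
    exact hM.isHermitian.apply _ _
  · intro v
    have key : star v ⬝ᵥ (Matrix.of fun o o' => ∑ f, M (o, f) (o', f)) *ᵥ v
        = ∑ f, star (fun q : Fin dO × Fin dF => if q.2 = f then v q.1 else 0) ⬝ᵥ
            M *ᵥ (fun q => if q.2 = f then v q.1 else 0) := by
      simp only [dotProduct, Matrix.mulVec, Matrix.of_apply, Pi.star_apply,
        Fintype.sum_prod_type, apply_ite (star : ℂ → ℂ), star_zero, ite_mul, mul_ite,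
        mul_zero, zero_mul, Finset.sum_ite_eq', Finset.mem_univ, if_true, Finset.mul_sum,
        Finset.sum_mul]
      conv_lhs => rw [Finset.sum_comm]
      refine Eq.trans (Finset.sum_congr rfl fun x _ => Finset.sum_comm) ?_
      conv_lhs => rw [Finset.sum_comm]
      refine Finset.sum_congr rfl fun f _ => ?_
      conv_lhs => rw [Finset.sum_comm]
      refine Finset.sum_congr rfl fun o _ => ?_
      conv_rhs => rw [Finset.sum_comm]
      simp [Finset.sum_ite_eq']
    rw [key]
    exact Finset.sum_nonneg fun f _ => hM.dotProduct_mulVec_nonneg _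
lemma kron_one_herm {dOut dF : ℕ} {P : Matrix (Fin dF) (Fin dF) ℂ} (h : P.IsHermitian) :
    ((1 : Matrix (Fin dOut) (Fin dOut) ℂ) ⊗ₖ P).IsHermitian := by
  ext ⟨o, f⟩ ⟨o', f'⟩
  simp only [Matrix.conjTranspose_apply, Matrix.kroneckerMap_apply, star_mul']
  congr 1
  · simp [Matrix.one_apply, apply_ite (star : ℂ → ℂ), eq_comm]
  · exact h.apply f f'
lemma sum_sum_ite_eq_left {α β : Type*} [Fintype α] [Fintype β] [DecidableEq α]
    (o : α) (g : α → β → ℂ) :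
    ∑ a : α, ∑ b : β, (if o = a then g a b else 0) = ∑ b, g o b := by
  rw [Finset.sum_comm]
  simp
lemma sum_sum_ite_eq_right {α β : Type*} [Fintype α] [Fintype β] [DecidableEq α]
    (o : α) (g : α → β → ℂ) :
    ∑ a : α, ∑ b : β, (if a = o then g a b else 0) = ∑ b, g o b := by
  rw [Finset.sum_comm]
  simp
lemma condOut_eq {dIn dOut : ℕ} (pr : Protocol dIn dOut) (ρ : Matrix (Fin dIn) (Fin dIn) ℂ) :
    condOut pr ρ = Matrix.of fun o o' => ∑ f,
      (((1 : Matrix (Fin dOut) (Fin dOut) ℂ) ⊗ₖ pr.P) * pr.Λ ρ *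
        ((1 : Matrix (Fin dOut) (Fin dOut) ℂ) ⊗ₖ pr.P)) (o, f) (o', f) := by
  ext o o'
  simp only [condOut, Matrix.of_apply, Matrix.mul_apply, Matrix.kroneckerMap_apply,
    Matrix.one_apply, Fintype.sum_prod_type, ite_mul, mul_ite, one_mul, zero_mul, mul_zero,
    mul_one, Finset.sum_ite_eq, Finset.sum_ite_eq', Finset.mem_univ, if_true,
    Finset.sum_mul, Finset.mul_sum]
  simp only [sum_sum_ite_eq_left, sum_sum_ite_eq_right]
  refine Eq.symm ?_
  conv_lhs => rw [Finset.sum_comm]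
  refine Eq.trans (Finset.sum_congr rfl fun b _ => Finset.sum_comm) ?_
  refine Finset.sum_congr rfl fun b _ => ?_
  refine Finset.sum_congr rfl fun b1 _ => ?_
  have h2 : ∑ x, pr.P x b1 * (pr.Λ ρ (o, b1) (o', b)) * pr.P b x
      = (∑ x, pr.P b x * pr.P x b1) * pr.Λ ρ (o, b1) (o', b) := by
    rw [Finset.sum_mul]
    exact Finset.sum_congr rfl fun x _ => by ring
  rw [h2, ← Matrix.mul_apply, pr.hproj]
lemma condOut_posSemidef {dIn dOut : ℕ} (pr : Protocol dIn dOut)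
    {ρ : Matrix (Fin dIn) (Fin dIn) ℂ} (hρ : ρ.PosSemidef) : (condOut pr ρ).PosSemidef := by
  have hX := lam_posSemidef pr.Λ pr.cp hρ
  set Q := (1 : Matrix (Fin dOut) (Fin dOut) ℂ) ⊗ₖ pr.P with hQ
  have hQh : Qᴴ = Q := kron_one_herm pr.hherm
  have hM : (Q * pr.Λ ρ * Q).PosSemidef := by
    have := hX.conjTranspose_mul_mul_same Q
    rwa [hQh] at this
  rw [condOut_eq pr ρ]
  exact partialTrace_posSemidef hM
lemma succProb_nonneg {dIn dOut : ℕ} (pr : Protocol dIn dOut)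
    {ρ : Matrix (Fin dIn) (Fin dIn) ℂ} (hρ : ρ.PosSemidef) : 0 ≤ succProb pr ρ := by
  have h := psd_trace_nonneg' (condOut_posSemidef pr hρ)
  exact (Complex.le_def.mp h).1
lemma num_nonneg {dIn dOut : ℕ} (φ : Fin dOut → ℂ) (pr : Protocol dIn dOut)
    {ρ : Matrix (Fin dIn) (Fin dIn) ℂ} (hρ : ρ.PosSemidef) :
    0 ≤ (star φ ⬝ᵥ (condOut pr ρ).mulVec φ).re := by
  simpa using (condOut_posSemidef pr hρ).re_dotProduct_nonneg φ
lemma num_le_succProb {dIn dOut : ℕ} (φ : Fin dOut → ℂ)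
    (hφ : ∑ o, star (φ o) * φ o = 1) (pr : Protocol dIn dOut)
    {ρ : Matrix (Fin dIn) (Fin dIn) ℂ} (hρ : ρ.PosSemidef) :
    (star φ ⬝ᵥ (condOut pr ρ).mulVec φ).re ≤ succProb pr ρ := by
  set Ψ := condOut pr ρ with hΨdef
  have hΨ := condOut_posSemidef pr hρ
  set W := Matrix.vecMulVec φ (star φ) with hWdef
  have hW2 : W * W = W := by
    ext a b
    simp only [Matrix.mul_apply, Matrix.vecMulVec_apply, Pi.star_apply, hWdef]
    have h1 : ∀ c, (φ a * star (φ c)) * (φ c * star (φ b))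
        = (star (φ c) * φ c) * (φ a * star (φ b)) := fun c => by ring
    rw [Finset.sum_congr rfl fun c _ => h1 c, ← Finset.sum_mul, hφ, one_mul]
  have hWh : Wᴴ = W := by
    ext a b
    simp only [Matrix.conjTranspose_apply, Matrix.vecMulVec_apply, Pi.star_apply, star_mul',
      star_star, hWdef]
    ring
  set R := (1 : Matrix (Fin dOut) (Fin dOut) ℂ) - W with hRdef
  have hRh : Rᴴ = R := by
    rw [hRdef, Matrix.conjTranspose_sub, Matrix.conjTranspose_one, hWh]
  have hRR : R * R = R := by
    rw [hRdef, Matrix.sub_mul, Matrix.one_mul, Matrix.mul_sub, Matrix.mul_one, hW2]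
    abel
  have hR : R.PosSemidef := Matrix.posSemidef_iff_eq_transpose_mul_self.mpr ⟨R, by rw [hRh, hRR]⟩
  have h0 : 0 ≤ (Ψ * R).trace := trace_mul_psd_nonneg hΨ hR
  have hsplit : (Ψ * R).trace = Ψ.trace - (Ψ * W).trace := by
    rw [hRdef, Matrix.mul_sub, Matrix.mul_one, Matrix.trace_sub]
  have hΨW : (Ψ * W).trace = star φ ⬝ᵥ Ψ.mulVec φ := by
    simp only [Matrix.trace, Matrix.diag, Matrix.mul_apply, Matrix.vecMulVec_apply,
      dotProduct, Matrix.mulVec, Pi.star_apply, Finset.mul_sum]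
    refine Finset.sum_congr rfl fun a _ => Finset.sum_congr rfl fun b _ => ?_
    rw [hWdef]
    simp only [Matrix.vecMulVec_apply, Pi.star_apply]
    ring
  rw [hsplit, hΨW] at h0
  have h1 := (Complex.le_def.mp h0).1
  simp only [Complex.zero_re, Complex.sub_re] at h1
  have hps : succProb pr ρ = Ψ.trace.re := rfl
  rw [hps]
  linarith [h1]
lemma succProb_le_one {dIn dOut : ℕ} (pr : Protocol dIn dOut)
    {ρ : Matrix (Fin dIn) (Fin dIn) ℂ} (hρ : ρ.PosSemidef) (htr : ρ.trace = 1) :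
    succProb pr ρ ≤ 1 := by
  set Q := (1 : Matrix (Fin dOut) (Fin dOut) ℂ) ⊗ₖ pr.P with hQdef
  set X := pr.Λ ρ with hXdef
  have hX := lam_posSemidef pr.Λ pr.cp hρ
  have htrQX : (condOut pr ρ).trace = (Q * X).trace := by
    simp [condOut, Matrix.trace, Matrix.diag, Fintype.sum_prod_type, hQdef, hXdef]
  set P' := (1 : Matrix (Fin pr.dF) (Fin pr.dF) ℂ) - pr.P with hP'def
  set Q' := (1 : Matrix (Fin dOut) (Fin dOut) ℂ) ⊗ₖ P' with hQ'def
  have hQ'eq : (1 : Matrix (Fin dOut × Fin pr.dF) (Fin dOut × Fin pr.dF) ℂ) - Q = Q' := by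
    ext ⟨o, f⟩ ⟨o', f'⟩
    simp only [Matrix.sub_apply, Matrix.kroneckerMap_apply, Matrix.one_apply, hQ'def, hP'def,
      hQdef, Prod.mk.injEq, mul_sub, mul_one]
    split_ifs with h1 h2 h3 <;> simp_all
  have hQ'h : Q'ᴴ = Q' := kron_one_herm (Matrix.isHermitian_one.sub pr.hherm)
  have hP'2 : P' * P' = P' := by
    rw [hP'def, Matrix.sub_mul, Matrix.one_mul, Matrix.mul_sub, Matrix.mul_one, pr.hproj]
    abel
  have hQ'2 : Q' * Q' = Q' := by
    rw [hQ'def, ← Matrix.mul_kronecker_mul, Matrix.one_mul, hP'2]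
  have hQ' : Q'.PosSemidef :=
    Matrix.posSemidef_iff_eq_transpose_mul_self.mpr ⟨Q', by rw [hQ'h, hQ'2]⟩
  have h0 : 0 ≤ (Q' * X).trace := trace_mul_psd_nonneg hQ' hX
  have hsplit : (Q' * X).trace = X.trace - (Q * X).trace := by
    rw [← hQ'eq, Matrix.sub_mul, Matrix.one_mul, Matrix.trace_sub]
  have hXtr : X.trace = 1 := by rw [hXdef, pr.tp, htr]
  rw [hsplit, hXtr] at h0
  have := (Complex.le_def.mp h0).1
  simp only [Complex.zero_re, Complex.sub_re, Complex.one_re] at this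
  have : (Q * X).trace.re ≤ 1 := by linarith
  calc succProb pr ρ = (Q * X).trace.re := by rw [succProb, htrQX]
  _ ≤ 1 := this
lemma condOut_smul {dIn dOut : ℕ} (pr : Protocol dIn dOut) (a : ℂ)
    (ρ : Matrix (Fin dIn) (Fin dIn) ℂ) : condOut pr (a • ρ) = a • condOut pr ρ := by
  ext o o'
  simp only [condOut, _root_.map_smul, Matrix.mul_smul, Matrix.smul_apply, smul_eq_mul,
    Finset.mul_sum]
lemma condOut_sum {dIn dOut : ℕ} {ι : Type} [Fintype ι] (pr : Protocol dIn dOut)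
    (g : ι → Matrix (Fin dIn) (Fin dIn) ℂ) :
    condOut pr (∑ i, g i) = ∑ i, condOut pr (g i) := by
  ext o o'
  simp only [condOut, map_sum, Matrix.mul_sum, Matrix.sum_apply]
  exact Finset.sum_comm
lemma quad_sum {d : ℕ} {ι : Type} [Fintype ι] (φ : Fin d → ℂ) (M : ι → Matrix (Fin d) (Fin d) ℂ) :
    star φ ⬝ᵥ (∑ i, M i).mulVec φ = ∑ i, star φ ⬝ᵥ (M i).mulVec φ := by
  simp only [dotProduct, Matrix.mulVec, Matrix.sum_apply, Finset.sum_apply,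
    Finset.mul_sum, Finset.sum_mul]
  refine Eq.trans (Finset.sum_congr rfl fun a _ => Finset.sum_comm) ?_
  refine Eq.trans Finset.sum_comm ?_
  refine Finset.sum_congr rfl fun i _ => ?_
  refine Finset.sum_congr rfl fun a _ => ?_
  refine Finset.sum_congr rfl fun b _ => by ring
lemma quad_smul {d : ℕ} (φ : Fin d → ℂ) (a : ℂ) (M : Matrix (Fin d) (Fin d) ℂ) :
    star φ ⬝ᵥ (a • M).mulVec φ = a * (star φ ⬝ᵥ M.mulVec φ) := by
  simp only [dotProduct, Matrix.mulVec, Matrix.smul_apply, smul_eq_mul,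
    Finset.mul_sum, Finset.sum_mul]
  refine Finset.sum_congr rfl fun i _ => ?_
  refine Finset.sum_congr rfl fun b _ => by ring

/-- Success probability bound for mixtures: if a protocol attains the optimal fidelity of a
mixture, which equals the maximum of the optimal fidelities of the components, and the component
`k` maximizing the protocol's conditional fidelity is unique, then the success probability on
the mixture is at most the weight `λ_k`. -/
theorem succProb_mixture_le_weight {dIn dOut : ℕ} (φ : Fin dOut → ℂ)
    (hφ : ∑ o, star (φ o) * φ o = 1)
    {ι : Type} [Fintype ι] [Nonempty ι]
    (lam : ι → ℝ) (hlam : ∀ i, 0 < lam i) (hsum : ∑ i, lam i = 1)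
    (ρc : ι → Matrix (Fin dIn) (Fin dIn) ℂ)
    (hpos : ∀ i, (ρc i).PosSemidef) (htr : ∀ i, (ρc i).trace = 1)
    (pr : Protocol dIn dOut)
    (hp : 0 < succProb pr (∑ i, (lam i : ℂ) • ρc i))
    (hopt : fid φ pr (∑ i, (lam i : ℂ) • ρc i) = fopt φ (∑ i, (lam i : ℂ) • ρc i))
    (hmaxcomp : fopt φ (∑ i, (lam i : ℂ) • ρc i)
      = Finset.univ.sup' Finset.univ_nonempty (fun i => fopt φ (ρc i)))
    (k : ι) (hpk : 0 < succProb pr (ρc k))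
    (hkmax : ∀ i, 0 < succProb pr (ρc i) → fid φ pr (ρc i) ≤ fid φ pr (ρc k))
    (hkunique : ∀ i, i ≠ k → 0 < succProb pr (ρc i) → fid φ pr (ρc i) < fid φ pr (ρc k)) :
    succProb pr (∑ i, (lam i : ℂ) • ρc i) ≤ lam k := by
  classical
  set ρmix := ∑ i, (lam i : ℂ) • ρc i with hρmix
  have hcond : condOut pr ρmix = ∑ i, (lam i : ℂ) • condOut pr (ρc i) := by
    rw [hρmix, condOut_sum]
    exact Finset.sum_congr rfl fun i _ => condOut_smul pr _ _
  -- abbreviations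
  set p : ι → ℝ := fun i => succProb pr (ρc i) with hpdef
  set N : ι → ℝ := fun i => (star φ ⬝ᵥ (condOut pr (ρc i)).mulVec φ).re with hNdef
  set fk : ℝ := fid φ pr (ρc k) with hfkdef
  -- success probability decomposes
  have hpsum : succProb pr ρmix = ∑ i, lam i * p i := by
    rw [succProb, hcond, Matrix.trace_sum]
    rw [Complex.re_sum]
    refine Finset.sum_congr rfl fun i _ => ?_
    rw [Matrix.trace_smul, smul_eq_mul, Complex.re_ofReal_mul]
    rfl
  -- numerator decomposes
  have hNsum : (star φ ⬝ᵥ (condOut pr ρmix).mulVec φ).re = ∑ i, lam i * N i := by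
    rw [hcond, quad_sum, Complex.re_sum]
    refine Finset.sum_congr rfl fun i _ => ?_
    rw [quad_smul, Complex.re_ofReal_mul]
  have hpnn : ∀ i, 0 ≤ p i := fun i => succProb_nonneg pr (hpos i)
  -- each numerator bounded by p i * fk
  have hNle : ∀ i, N i ≤ p i * fk := by
    intro i
    by_cases hpi : 0 < p i
    · have hfi := hkmax i hpi
      have : fid φ pr (ρc i) = N i / p i := rfl
      rw [this, div_le_iff₀ hpi] at hfi
      calc N i ≤ fk * p i := hfi
      _ = p i * fk := by ring
    · have hz : p i = 0 := le_antisymm (not_lt.mp hpi) (hpnn i)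
      have h1 : N i ≤ p i := num_le_succProb φ hφ pr (hpos i)
      have h2 : 0 ≤ N i := num_nonneg φ pr (hpos i)
      rw [hz] at h1 ⊢
      simp only [zero_mul]
      linarith
  -- f_k ≤ fid(mix)
  have hfk_le : fk ≤ fid φ pr ρmix := by
    have hb : BddAbove {x : ℝ | ∃ pr' : Protocol dIn dOut,
        0 < succProb pr' (ρc k) ∧ fid φ pr' (ρc k) = x} := by
      refine ⟨1, ?_⟩
      rintro x ⟨pr', hp', rfl⟩
      rw [fid, div_le_one hp']
      exact num_le_succProb φ hφ pr' (hpos k)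
    have h1 : fk ≤ fopt φ (ρc k) := le_csSup hb ⟨pr, hpk, rfl⟩
    have h2 : fopt φ (ρc k) ≤ Finset.univ.sup' Finset.univ_nonempty (fun i => fopt φ (ρc i)) :=
      Finset.le_sup' (fun i => fopt φ (ρc i)) (Finset.mem_univ k)
    rw [hopt, hmaxcomp]
    exact le_trans h1 h2
  -- fid(mix) ≤ f_k
  have hfid_le : fid φ pr ρmix ≤ fk := by
    rw [fid, div_le_iff₀ hp, hNsum, hpsum]
    calc ∑ i, lam i * N i ≤ ∑ i, lam i * (p i * fk) :=
      Finset.sum_le_sum fun i _ => mul_le_mul_of_nonneg_left (hNle i) (hlam i).le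
    _ = fk * ∑ i, lam i * p i := by rw [Finset.mul_sum]; exact Finset.sum_congr rfl fun i _ => by ring
  have hfeq : fid φ pr ρmix = fk := le_antisymm hfid_le hfk_le
  have hNmix : (star φ ⬝ᵥ (condOut pr ρmix).mulVec φ).re = fk * succProb pr ρmix := by
    have : fid φ pr ρmix = (star φ ⬝ᵥ (condOut pr ρmix).mulVec φ).re / succProb pr ρmix := rfl
    rw [this] at hfeq
    field_simp at hfeq
    linarith [hfeq]
  -- sum of nonnegative terms is zero
  have hzero : ∑ i, lam i * (p i * fk - N i) = 0 := by
    have : ∑ i, lam i * (p i * fk - N i)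
        = fk * (∑ i, lam i * p i) - ∑ i, lam i * N i := by
      rw [Finset.mul_sum, ← Finset.sum_sub_distrib]
      exact Finset.sum_congr rfl fun i _ => by ring
    rw [this, ← hpsum, ← hNsum, hNmix]
    ring
  have hterm : ∀ i ∈ Finset.univ, lam i * (p i * fk - N i) = 0 := by
    rw [← Finset.sum_eq_zero_iff_of_nonneg]
    · exact hzero
    · intro i _
      have := hNle i
      nlinarith [(hlam i).le]
  -- components other than k have zero success probability
  have hpi0 : ∀ i, i ≠ k → p i = 0 := by
    intro i hik
    by_contra hne
    have hpi : 0 < p i := lt_of_le_of_ne (hpnn i) (Ne.symm hne)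
    have hlt := hkunique i hik hpi
    have hNi : N i = fid φ pr (ρc i) * p i := by
      have : fid φ pr (ρc i) = N i / p i := rfl
      rw [this]
      field_simp
    have h := hterm i (Finset.mem_univ i)
    have : p i * fk - N i > 0 := by
      rw [hNi]
      nlinarith [hpi, hlt]
    nlinarith [hlam i, this]
  -- conclude
  have hfinal : succProb pr ρmix = lam k * p k := by
    rw [hpsum]
    rw [Finset.sum_eq_single k]
    · intro i _ hik
      rw [hpi0 i hik, mul_zero]
    · intro h
      exact absurd (Finset.mem_univ k) h
  rw [hfinal]
  have hpk1 : p k ≤ 1 := succProb_le_one pr (hpos k) (htr k)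
  exact mul_le_of_le_one_right (hlam k).le hpk1

end
end

section
/- EPL-D extracts a perfect Bell state: given two copies of the R state τ = p|Ψ⁺⟩⟨Ψ⁺| + (1−p)|11⟩⟨11|, applying bilateral CNOTs (Alice's CNOT from qubit A1 to A2, Bob's from B1 to B2), measuring the target qubits A2, B2 in the computational basis and post-selecting on both outcomes being 1, yields outcome probability p²/2, and the post-measurement state on A1B1 is exactly the maximally entangled state |Ψ⁺⟩⟨Ψ⁺|. -/
open Matrix Kronecker

noncomputable section

def ket (a b : Fin 2) : Fin 2 × Fin 2 → ℂ := fun i => if i = (a, b) then 1 else 0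

/-- `|Ψ⁺⟩ = (|01⟩ + |10⟩)/√2`. -/
def PsiPlus : Fin 2 × Fin 2 → ℂ := fun i => ((Real.sqrt 2)⁻¹ : ℝ) * (ket 0 1 i + ket 1 0 i)

def proj (v : Fin 2 × Fin 2 → ℂ) : Matrix (Fin 2 × Fin 2) (Fin 2 × Fin 2) ℂ :=
  Matrix.vecMulVec v (star v)

/-- The R state `τ = p|Ψ⁺⟩⟨Ψ⁺| + (1−p)|11⟩⟨11|`. -/
def Rstate (p : ℝ) : Matrix (Fin 2 × Fin 2) (Fin 2 × Fin 2) ℂ :=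
  (p : ℂ) • proj PsiPlus + ((1 - p : ℝ) : ℂ) • proj (ket 1 1)

/-- Bilateral CNOTs: Alice's CNOT from `A1` to `A2` and Bob's from `B1` to `B2`;
the registers are ordered `(A1, B1) × (A2, B2)`. -/
def bilateralCNOT :
    Matrix ((Fin 2 × Fin 2) × (Fin 2 × Fin 2)) ((Fin 2 × Fin 2) × (Fin 2 × Fin 2)) ℂ :=
  fun i j =>
    if i.1.1 = j.1.1 ∧ i.1.2 = j.1.2 ∧ i.2.1 = j.2.1 + j.1.1 ∧ i.2.2 = j.2.2 + j.1.2
    then 1 else 0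

/-- Projector onto outcome `1` on both target qubits `A2, B2`. -/
def post11 :
    Matrix ((Fin 2 × Fin 2) × (Fin 2 × Fin 2)) ((Fin 2 × Fin 2) × (Fin 2 × Fin 2)) ℂ :=
  fun i j => if i = j ∧ i.2 = (1, 1) then 1 else 0

/-- Partial trace over the second pair of qubits `A2 B2`. -/
def ptrace2
    (M : Matrix ((Fin 2 × Fin 2) × (Fin 2 × Fin 2)) ((Fin 2 × Fin 2) × (Fin 2 × Fin 2)) ℂ) :
    Matrix (Fin 2 × Fin 2) (Fin 2 × Fin 2) ℂ :=
  fun x y => ∑ z : Fin 2 × Fin 2, M (x, z) (y, z)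

/-- The involutive relabeling of basis states implemented by the bilateral CNOTs. -/
def cnotFun (i : (Fin 2 × Fin 2) × (Fin 2 × Fin 2)) : (Fin 2 × Fin 2) × (Fin 2 × Fin 2) :=
  ((i.1.1, i.1.2), (i.2.1 + i.1.1, i.2.2 + i.1.2))

lemma hB (i k : (Fin 2 × Fin 2) × (Fin 2 × Fin 2)) :
    bilateralCNOT i k = if k = cnotFun i then (1:ℂ) else 0 := by
  have h : (i.1.1 = k.1.1 ∧ i.1.2 = k.1.2 ∧ i.2.1 = k.2.1 + k.1.1 ∧ i.2.2 = k.2.2 + k.1.2)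
      ↔ k = cnotFun i := by revert i k; decide
  simp only [bilateralCNOT]
  rw [if_congr h rfl rfl]

lemma Bconj (M : Matrix ((Fin 2 × Fin 2) × (Fin 2 × Fin 2)) ((Fin 2 × Fin 2) × (Fin 2 × Fin 2)) ℂ)
    (i j : (Fin 2 × Fin 2) × (Fin 2 × Fin 2)) :
    (bilateralCNOT * M * bilateralCNOTᴴ) i j = M (cnotFun i) (cnotFun j) := by
  simp [Matrix.mul_apply, hB, conjTranspose_apply, apply_ite, Finset.sum_ite_eq']

lemma hsq : ((Real.sqrt 2)⁻¹ : ℂ) * ((Real.sqrt 2)⁻¹ : ℂ) = 1/2 := by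
  rw [← Complex.ofReal_inv, ← Complex.ofReal_mul, ← mul_inv,
    Real.mul_self_sqrt (le_of_lt two_pos)]
  norm_num

lemma hproj (i j : Fin 2 × Fin 2) :
    proj PsiPlus i j =
      if (i = (0,1) ∨ i = (1,0)) ∧ (j = (0,1) ∨ j = (1,0)) then (1/2 : ℂ) else 0 := by
  obtain ⟨a, b⟩ := i; obtain ⟨c, d⟩ := j
  fin_cases a <;> fin_cases b <;> fin_cases c <;> fin_cases d <;>
    simp [proj, PsiPlus, ket, vecMulVec_apply, Prod.ext_iff, hsq]

lemma hproj11 (i j : Fin 2 × Fin 2) :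
    proj (ket 1 1) i j = if i = (1,1) ∧ j = (1,1) then (1:ℂ) else 0 := by
  obtain ⟨a, b⟩ := i; obtain ⟨c, d⟩ := j
  fin_cases a <;> fin_cases b <;> fin_cases c <;> fin_cases d <;>
    simp [proj, ket, vecMulVec_apply, Prod.ext_iff]

lemma hR (p : ℝ) (i j : Fin 2 × Fin 2) :
    Rstate p i j =
      (if (i = (0,1) ∨ i = (1,0)) ∧ (j = (0,1) ∨ j = (1,0)) then ((p:ℂ)/2) else 0)
      + (if i = (1,1) ∧ j = (1,1) then ((1-p:ℝ):ℂ) else 0) := by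
  simp only [Rstate, Matrix.add_apply, Matrix.smul_apply, hproj, hproj11, smul_eq_mul,
    mul_ite, mul_one, mul_zero]
  ring_nf

lemma post_trace (M : Matrix ((Fin 2 × Fin 2) × (Fin 2 × Fin 2)) ((Fin 2 × Fin 2) × (Fin 2 × Fin 2)) ℂ) :
    (post11 * M * post11).trace = ∑ x : Fin 2 × Fin 2, M (x, (1,1)) (x, (1,1)) := by
  simp [Matrix.trace, Matrix.diag, Matrix.mul_apply, post11, ite_and, Finset.sum_ite_eq,
    Finset.sum_ite_eq', Fintype.sum_prod_type]

lemma post_ptrace (M : Matrix ((Fin 2 × Fin 2) × (Fin 2 × Fin 2)) ((Fin 2 × Fin 2) × (Fin 2 × Fin 2)) ℂ)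
    (x y : Fin 2 × Fin 2) :
    ptrace2 (post11 * M * post11) x y = M (x, (1,1)) (y, (1,1)) := by
  simp [ptrace2, Matrix.mul_apply, post11, ite_and, Finset.sum_ite_eq, Finset.sum_ite_eq']

/-- EPL-D extracts a perfect Bell state from two copies of the R state: the post-selection
on both target measurement outcomes being `1` occurs with probability `p²/2`, and the
post-measurement state on `A1 B1` is exactly `|Ψ⁺⟩⟨Ψ⁺|`. -/
theorem epld_extracts_bell (p : ℝ) (hp0 : 0 < p) (hp1 : p ≤ 1) :
    (post11 * (bilateralCNOT * (Rstate p ⊗ₖ Rstate p) * bilateralCNOTᴴ) * post11).trace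
      = ((p ^ 2 / 2 : ℝ) : ℂ)
    ∧ ((p ^ 2 / 2 : ℝ) : ℂ)⁻¹ •
        ptrace2 (post11 * (bilateralCNOT * (Rstate p ⊗ₖ Rstate p) * bilateralCNOTᴴ) * post11)
      = proj PsiPlus := by
  have hp : ((p ^ 2 / 2 : ℝ) : ℂ) ≠ 0 := by
    simp only [ne_eq, Complex.ofReal_eq_zero]
    positivity
  have hpc : (p : ℂ) ≠ 0 := Complex.ofReal_ne_zero.mpr (ne_of_gt hp0)
  constructor
  · rw [post_trace]
    simp only [Bconj, kroneckerMap_apply, hR, cnotFun, Fintype.sum_prod_type, Fin.sum_univ_two]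
    norm_num [Prod.ext_iff]
    push_cast
    ring_nf
  · ext x y
    rw [Matrix.smul_apply, post_ptrace, Bconj, hproj]
    simp only [kroneckerMap_apply, hR, cnotFun]
    obtain ⟨a, b⟩ := x; obtain ⟨c, d⟩ := y
    fin_cases a <;> fin_cases b <;> fin_cases c <;> fin_cases d <;>
      simp [Prod.ext_iff, smul_eq_mul] <;>
      · push_cast
        field_simp
        all_goals ring
  done

end
end
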